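/- Let η = (η₁, η₂) ∈ ℝ² with η ≠ 0, write r = |η|, let a, b ∈ ℂ³, a₀ ∈ ℂ, and let v : ℝ → ℂ³ be given by v(t) = (e^{−rt}/(8r³)) · (−i η₁ r t², −i η₂ r t², r² t² − 2 r t − 2). Define u(t) = e^{−rt}(a + t b) + a₀ v(t). Assume the Dirichlet conditions a₁ = a₂ = 0 and a₃ = a₀/(4r³) (i.e. u(0) = 0). Then for j = 1,2 one has uⱼ''(0) − i ηⱼ u₃'(0) = −(2 r bⱼ + i ηⱼ b₃); in particular the parameter a₀ cancels, and the two principal wall–eddy boundary conditions uⱼ''(0) − i ηⱼ u₃'(0) = 0 (j = 1,2) are equivalent to 2 r bⱼ + i ηⱼ b₃ = 0 for j = 1,2. -/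

import Mathlib

/-- The particular solution
`v(t) = (e^{−rt}/(8r³)) · (−iη₁rt², −iη₂rt², r²t² − 2rt − 2)` with `r = |η|`. -/
noncomputable def vpart (η : EuclideanSpace ℝ (Fin 2)) (t : ℝ) : Fin 3 → ℂ :=
  (Complex.exp (-(‖η‖ : ℂ) * (t : ℂ)) / (8 * (‖η‖ : ℂ)^3)) •
    ![-Complex.I * (η 0 : ℂ) * (‖η‖ : ℂ) * (t : ℂ)^2,
      -Complex.I * (η 1 : ℂ) * (‖η‖ : ℂ) * (t : ℂ)^2,
      (‖η‖ : ℂ)^2 * (t : ℂ)^2 - 2 * (‖η‖ : ℂ) * (t : ℂ) - 2]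

/-- The general decaying solution `u(t) = e^{−rt}(a + t b) + a₀ v(t)`. -/
noncomputable def usol (η : EuclideanSpace ℝ (Fin 2)) (a b : Fin 3 → ℂ) (a₀ : ℂ)
    (t : ℝ) : Fin 3 → ℂ :=
  fun i => Complex.exp (-(‖η‖ : ℂ) * (t : ℂ)) * (a i + (t : ℂ) * b i) + a₀ * vpart η t i

lemma hasDerivAt_G (r c0 c1 c2 : ℂ) (z : ℂ) :
    HasDerivAt (fun z : ℂ => Complex.exp (-r*z) * (c0 + c1*z + c2*z^2))
      (Complex.exp (-r*z) * ((c1 - r*c0) + (2*c2 - r*c1)*z + (-(r*c2))*z^2)) z := by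
  have h1 : HasDerivAt (fun z : ℂ => Complex.exp (-r*z)) (Complex.exp (-r*z) * (-r)) z := by
    simpa using ((hasDerivAt_id z).const_mul (-r)).cexp
  have h2 : HasDerivAt (fun z : ℂ => c0 + c1*z + c2*z^2) (c1 + c2 * (2*z)) z := by
    have := (((hasDerivAt_id z).const_mul c1).const_add c0).add ((hasDerivAt_pow 2 z).const_mul c2)
    exact this.congr_deriv (by simp [mul_comm])
  have := h1.mul h2
  exact this.congr_deriv (by ring)

lemma deriv_G_real (r c0 c1 c2 : ℂ) :
    deriv (fun t : ℝ => Complex.exp (-r*t) * (c0 + c1*t + c2*t^2))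
      = fun t : ℝ => Complex.exp (-r*t) * ((c1 - r*c0) + (2*c2 - r*c1)*t + (-(r*c2))*t^2) :=
  funext fun t => ((hasDerivAt_G r c0 c1 c2 t).comp_ofReal).deriv

lemma deriv1_G (r c0 c1 c2 : ℂ) :
    deriv (fun t : ℝ => Complex.exp (-r*t) * (c0 + c1*t + c2*t^2)) 0 = c1 - r*c0 := by
  rw [deriv_G_real]
  simp

lemma deriv2_G (r c0 c1 c2 : ℂ) :
    iteratedDeriv 2 (fun t : ℝ => Complex.exp (-r*t) * (c0 + c1*t + c2*t^2)) 0
      = 2*c2 - 2*r*c1 + r^2*c0 := by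
  rw [show (2:ℕ) = 1 + 1 from rfl, iteratedDeriv_succ, iteratedDeriv_one,
    deriv_G_real, deriv_G_real]
  simp
  ring

/-- With the Dirichlet conditions `a₁ = a₂ = 0`, `a₃ = a₀/(4r³)` (i.e. `u(0) = 0`),
one has `uⱼ''(0) − iηⱼ u₃'(0) = −(2rbⱼ + iηⱼb₃)` for `j = 1,2`; in particular the
parameter `a₀` cancels, and the two principal wall–eddy boundary conditions
`uⱼ''(0) − iηⱼu₃'(0) = 0` (`j = 1,2`) are equivalent to `2rbⱼ + iηⱼb₃ = 0` for
`j = 1,2` (indices 0-based). -/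
theorem stmt16 (η : EuclideanSpace ℝ (Fin 2)) (hη : η ≠ 0)
    (a b : Fin 3 → ℂ) (a₀ : ℂ)
    (ha0 : a 0 = 0) (ha1 : a 1 = 0) (ha2 : a 2 = a₀ / (4 * (‖η‖ : ℂ)^3)) :
    (iteratedDeriv 2 (fun t => usol η a b a₀ t 0) 0
        - Complex.I * (η 0 : ℂ) * deriv (fun t => usol η a b a₀ t 2) 0
      = -(2 * (‖η‖ : ℂ) * b 0 + Complex.I * (η 0 : ℂ) * b 2)) ∧
    (iteratedDeriv 2 (fun t => usol η a b a₀ t 1) 0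
        - Complex.I * (η 1 : ℂ) * deriv (fun t => usol η a b a₀ t 2) 0
      = -(2 * (‖η‖ : ℂ) * b 1 + Complex.I * (η 1 : ℂ) * b 2)) ∧
    ((iteratedDeriv 2 (fun t => usol η a b a₀ t 0) 0
        - Complex.I * (η 0 : ℂ) * deriv (fun t => usol η a b a₀ t 2) 0 = 0 ∧
      iteratedDeriv 2 (fun t => usol η a b a₀ t 1) 0
        - Complex.I * (η 1 : ℂ) * deriv (fun t => usol η a b a₀ t 2) 0 = 0)
      ↔ (2 * (‖η‖ : ℂ) * b 0 + Complex.I * (η 0 : ℂ) * b 2 = 0 ∧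
         2 * (‖η‖ : ℂ) * b 1 + Complex.I * (η 1 : ℂ) * b 2 = 0)) := by
  have hr : (‖η‖ : ℂ) ≠ 0 := by
    exact_mod_cast (norm_ne_zero_iff.mpr hη)
  have e0 : (fun t : ℝ => usol η a b a₀ t 0)
      = fun t : ℝ => Complex.exp (-(‖η‖:ℂ)*t) * (a 0 + b 0 * t + (-(a₀ * Complex.I * (η 0 : ℂ)) / (8*(‖η‖:ℂ)^2)) * t^2) := by
    funext t
    simp only [usol, vpart, Pi.smul_apply, Matrix.cons_val_zero, smul_eq_mul]
    field_simp [hr]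
  have e1 : (fun t : ℝ => usol η a b a₀ t 1)
      = fun t : ℝ => Complex.exp (-(‖η‖:ℂ)*t) * (a 1 + b 1 * t + (-(a₀ * Complex.I * (η 1 : ℂ)) / (8*(‖η‖:ℂ)^2)) * t^2) := by
    funext t
    simp only [usol, vpart, Pi.smul_apply, Matrix.cons_val_one, Matrix.head_cons, Matrix.cons_val_zero, smul_eq_mul]
    field_simp [hr]
  have e2 : (fun t : ℝ => usol η a b a₀ t 2)
      = fun t : ℝ => Complex.exp (-(‖η‖:ℂ)*t) * ((a 2 - a₀/(4*(‖η‖:ℂ)^3)) + (b 2 - a₀/(4*(‖η‖:ℂ)^2)) * t + (a₀/(8*(‖η‖:ℂ))) * t^2) := by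
    funext t
    simp only [usol, vpart, Pi.smul_apply, smul_eq_mul,
      Matrix.cons_val_two, Matrix.tail_cons, Matrix.cons_val_succ, Matrix.cons_val_one,
      Matrix.head_cons, Matrix.cons_val_zero]
    field_simp [hr]
    ring
  rw [e0, e1, e2, deriv1_G, deriv2_G, deriv2_G, ha0, ha1, ha2]
  have h0 : 2 * (-(a₀ * Complex.I * (η 0 : ℂ)) / (8*(‖η‖:ℂ)^2)) - 2*(‖η‖:ℂ)*(b 0) + (‖η‖:ℂ)^2*0
      - Complex.I * (η 0 : ℂ) * ((b 2 - a₀/(4*(‖η‖:ℂ)^2)) - (‖η‖:ℂ) * (a₀ / (4*(‖η‖:ℂ)^3) - a₀/(4*(‖η‖:ℂ)^3)))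
      = -(2 * (‖η‖:ℂ) * b 0 + Complex.I * (η 0 : ℂ) * b 2) := by
    field_simp [hr]
    ring
  have h1 : 2 * (-(a₀ * Complex.I * (η 1 : ℂ)) / (8*(‖η‖:ℂ)^2)) - 2*(‖η‖:ℂ)*(b 1) + (‖η‖:ℂ)^2*0
      - Complex.I * (η 1 : ℂ) * ((b 2 - a₀/(4*(‖η‖:ℂ)^2)) - (‖η‖:ℂ) * (a₀ / (4*(‖η‖:ℂ)^3) - a₀/(4*(‖η‖:ℂ)^3)))
      = -(2 * (‖η‖:ℂ) * b 1 + Complex.I * (η 1 : ℂ) * b 2) := by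
    field_simp [hr]
    ring
  refine ⟨h0, h1, ?_⟩
  rw [h0, h1]
  simp only [neg_eq_zero]
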